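/- If G is a 3-connected 3-regular planar graph and G' is obtained from G by truncating a vertex v (replacing v by a triangle v_1 v_2 v_3, with v_i joined to the i-th former neighbor u_i of v), then G' is also 3-connected, 3-regular and planar, and |V(G')| = |V(G)| + 2. -/

import Mathlib

open SimpleGraph

/-- `H` is a minor of `G`: disjoint nonempty connected branch sets with edges
between the branch sets of adjacent vertices of `H`. -/
def GraphMinor {W V : Type} (H : SimpleGraph W) (G : SimpleGraph V) : Prop :=
  ∃ f : W → Set V,
    (∀ w, (f w).Nonempty) ∧
    (∀ w, (G.induce (f w)).Connected) ∧
    (∀ w w', w ≠ w' → Disjoint (f w) (f w')) ∧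
    (∀ w w', H.Adj w w' → ∃ x ∈ f w, ∃ y ∈ f w', G.Adj x y)

/-- A graph is planar iff it has no `K₅` minor and no `K_{3,3}` minor (Wagner's theorem). -/
def IsPlanar {V : Type} (G : SimpleGraph V) : Prop :=
  ¬ GraphMinor (completeGraph (Fin 5)) G ∧
  ¬ GraphMinor (completeBipartiteGraph (Fin 3) (Fin 3)) G

/-- A triangulation on the sphere: a maximal planar graph with at least 4 vertices. -/
def IsSphereTriangulation {V : Type} (T : SimpleGraph V) : Prop :=
  4 ≤ Nat.card V ∧ IsPlanar T ∧
    ∀ u v : V, u ≠ v → ¬ T.Adj u v →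
      ¬ IsPlanar (T ⊔ SimpleGraph.fromRel (fun a b => a = u ∧ b = v))

/-- `G` is 3-connected: at least 4 vertices, and removing any at most 2
vertices leaves a connected graph. -/
def ThreeConnected {V : Type} (G : SimpleGraph V) : Prop :=
  4 ≤ Nat.card V ∧ ∀ s : Set V, s.ncard ≤ 2 → (G.induce sᶜ).Connected

/-- The truncation of a vertex `v` (with neighbors `u 0, u 1, u 2`) in a cubic
graph: delete `v` and add a triangle `v₁ v₂ v₃`, joining `vᵢ` to `u i`. -/
def truncateVertex {V : Type} (G : SimpleGraph V) (v : V) (u : Fin 3 → V) :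
    SimpleGraph ({w : V // w ≠ v} ⊕ Fin 3) :=
  SimpleGraph.fromRel (fun a b =>
    match a, b with
    | Sum.inl w, Sum.inl w' => G.Adj w.1 w'.1
    | Sum.inl w, Sum.inr i => w.1 = u i
    | Sum.inr _, Sum.inl _ => False
    | Sum.inr i, Sum.inr j => i ≠ j)
open SimpleGraph

section Gen
variable {α β : Type} {A : SimpleGraph α} {B : SimpleGraph β}

lemma walk_map_reach (q : α → β) (s : Set α)
    (hq : ∀ a ∈ s, ∀ b ∈ s, A.Adj a b → B.Adj (q a) (q b) ∨ q a = q b) :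
    ∀ {x y : {z // z ∈ s}}, (A.induce s).Walk x y →
      (B.induce (q '' s)).Reachable ⟨q x.1, ⟨x.1, x.2, rfl⟩⟩ ⟨q y.1, ⟨y.1, y.2, rfl⟩⟩ := by
  intro x y w
  induction w with
  | nil => exact Reachable.refl _
  | @cons c d e h w ih =>
    have hcd : A.Adj c.1 d.1 := h
    obtain hA | hE := hq c.1 c.2 d.1 d.2 hcd
    · have hadj : (B.induce (q '' s)).Adj ⟨q c.1, ⟨c.1, c.2, rfl⟩⟩ ⟨q d.1, ⟨d.1, d.2, rfl⟩⟩ := hA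
      exact hadj.reachable.trans ih
    · have : (⟨q c.1, ⟨c.1, c.2, rfl⟩⟩ : {z // z ∈ q '' s}) = ⟨q d.1, ⟨d.1, d.2, rfl⟩⟩ :=
        Subtype.ext hE
      rw [this]
      exact ih

lemma induce_conn_map (q : α → β) (s : Set α)
    (hq : ∀ a ∈ s, ∀ b ∈ s, A.Adj a b → B.Adj (q a) (q b) ∨ q a = q b)
    (hc : (A.induce s).Connected) : (B.induce (q '' s)).Connected := by
  rw [connected_iff] at hc ⊢
  obtain ⟨hpre, hne⟩ := hc
  constructor
  · rintro ⟨x', hx'⟩ ⟨y', hy'⟩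
    obtain ⟨a, ha, rfl⟩ := hx'
    obtain ⟨b, hb, rfl⟩ := hy'
    obtain ⟨w⟩ := hpre ⟨a, ha⟩ ⟨b, hb⟩
    exact walk_map_reach q s hq w
  · obtain ⟨⟨a, ha⟩⟩ := hne
    exact ⟨⟨q a, ⟨a, ha, rfl⟩⟩⟩

lemma exists_adj_of_conn {s : Set α} (hc : (A.induce s).Connected) {x y : α}
    (hx : x ∈ s) (hy : y ∈ s) (hxy : x ≠ y) : ∃ z ∈ s, A.Adj x z := by
  obtain ⟨w⟩ := hc.preconnected ⟨x, hx⟩ ⟨y, hy⟩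
  cases w with
  | nil => exact absurd rfl hxy
  | @cons c d e h w => exact ⟨d.1, d.2, h⟩

lemma induce_singleton_conn (x : α) : (A.induce {x}).Connected := by
  rw [connected_iff]
  refine ⟨?_, ⟨⟨x, rfl⟩⟩⟩
  rintro ⟨a, ha⟩ ⟨b, hb⟩
  simp only [Set.mem_singleton_iff] at ha hb
  subst ha; subst hb
  exact Reachable.refl _
end Gen

section Trunc
variable {V : Type} {G : SimpleGraph V} {v : V} {u : Fin 3 → V}

/-- projection back to `V`, sending the triangle to `v`. -/
def tproj (v : V) : ({w : V // w ≠ v} ⊕ Fin 3) → V := Sum.elim Subtype.val fun _ => v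

@[simp] lemma tproj_inl (a : {w : V // w ≠ v}) : tproj v (Sum.inl a) = a.1 := rfl
@[simp] lemma tproj_inr (i : Fin 3) : tproj v (Sum.inr i) = v := rfl

lemma tadj_inl_inl {a b : {w : V // w ≠ v}} :
    (truncateVertex G v u).Adj (Sum.inl a) (Sum.inl b) ↔ G.Adj a.1 b.1 := by
  rw [truncateVertex, fromRel_adj]
  constructor
  · rintro ⟨h, h1 | h1⟩
    · exact h1
    · exact h1.symm
  · intro h
    exact ⟨by simp [Subtype.ext_iff.ne.mpr h.ne], Or.inl h⟩

lemma tadj_inl_inr {a : {w : V // w ≠ v}} {i : Fin 3} :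
    (truncateVertex G v u).Adj (Sum.inl a) (Sum.inr i) ↔ a.1 = u i := by
  rw [truncateVertex, fromRel_adj]
  constructor
  · rintro ⟨h, h1 | h1⟩
    · exact h1
    · exact h1.elim
  · intro h
    exact ⟨by simp, Or.inl h⟩

lemma tadj_inr_inl {a : {w : V // w ≠ v}} {i : Fin 3} :
    (truncateVertex G v u).Adj (Sum.inr i) (Sum.inl a) ↔ a.1 = u i := by
  rw [adj_comm]; exact tadj_inl_inr

lemma tadj_inr_inr {i j : Fin 3} :
    (truncateVertex G v u).Adj (Sum.inr i : {w : V // w ≠ v} ⊕ Fin 3) (Sum.inr j) ↔ i ≠ j := by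
  rw [truncateVertex, fromRel_adj]
  constructor
  · rintro ⟨h, _⟩
    exact fun hij => h (by rw [hij])
  · intro h
    exact ⟨by simp [h], Or.inl h⟩

lemma tproj_hom (hadj : ∀ i, G.Adj v (u i)) {a b : {w : V // w ≠ v} ⊕ Fin 3}
    (h : (truncateVertex G v u).Adj a b) :
    G.Adj (tproj v a) (tproj v b) ∨ tproj v a = tproj v b := by
  cases a with
  | inl a =>
    cases b with
    | inl b => exact Or.inl (tadj_inl_inl.mp h)
    | inr i =>
      left
      rw [tproj_inl, tproj_inr, tadj_inl_inr.mp h]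
      exact (hadj i).symm
  | inr i =>
    cases b with
    | inl b =>
      left
      rw [tproj_inl, tproj_inr, tadj_inr_inl.mp h]
      exact hadj i
    | inr j => exact Or.inr rfl

lemma ui_ne_v (hadj : ∀ i, G.Adj v (u i)) (i : Fin 3) : u i ≠ v := (hadj i).ne'

lemma neighborSet_v_eq (hu : Function.Injective u) (hadj : ∀ i, G.Adj v (u i))
    (hreg : (G.neighborSet v).ncard = 3) [Fintype V] : G.neighborSet v = Set.range u := by
  have hsub : Set.range u ⊆ G.neighborSet v := by
    rintro _ ⟨i, rfl⟩; exact hadj i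
  have hcard : (Set.range u).ncard = 3 := by
    rw [← Set.image_univ, Set.ncard_image_of_injective _ hu, Set.ncard_univ]
    simp
  exact (Set.eq_of_subset_of_ncard_le hsub (by rw [hreg, hcard]) (Set.toFinite _)).symm
end Trunc
section Card
variable {V : Type} [Fintype V] (v : V)

lemma tcard_eq (hv4 : 4 ≤ Nat.card V) :
    Nat.card ({w : V // w ≠ v} ⊕ Fin 3) = Nat.card V + 2 := by
  classical
  have h1 : Fintype.card {w : V // w ≠ v} = Fintype.card V - 1 := by
    rw [Fintype.card_subtype_compl fun w => w = v, Fintype.card_subtype_eq v]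
  have h4 : 4 ≤ Fintype.card V := by rwa [Nat.card_eq_fintype_card] at hv4
  rw [Nat.card_eq_fintype_card, Nat.card_eq_fintype_card, Fintype.card_sum, h1]
  simp only [Fintype.card_fin]
  omega
end Card
section Reg
variable {V : Type} [Fintype V] {G : SimpleGraph V} {v : V} {u : Fin 3 → V}

lemma treg (hu : Function.Injective u) (hadj : ∀ i, G.Adj v (u i))
    (hreg : ∀ x : V, (G.neighborSet x).ncard = 3) :
    ∀ x, ((truncateVertex G v u).neighborSet x).ncard = 3 := by
  have hNv : G.neighborSet v = Set.range u := neighborSet_v_eq hu hadj (hreg v)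
  intro x
  cases x with
  | inl w =>
    have hbij : Set.BijOn (tproj v) ((truncateVertex G v u).neighborSet (Sum.inl w))
        (G.neighborSet w.1) := by
      refine ⟨?_, ?_, ?_⟩
      · intro a ha
        rw [SimpleGraph.mem_neighborSet] at ha
        cases a with
        | inl b => exact tadj_inl_inl.mp ha
        | inr i =>
          have h1 : w.1 = u i := tadj_inl_inr.mp ha
          simp only [tproj_inr, SimpleGraph.mem_neighborSet, h1]
          exact (hadj i).symm
      · intro a ha b hb hab
        rw [SimpleGraph.mem_neighborSet] at ha hb
        cases a with
        | inl a' =>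
          cases b with
          | inl b' => exact congrArg Sum.inl (Subtype.ext hab)
          | inr j => exact absurd hab a'.2
        | inr i =>
          cases b with
          | inl b' => exact absurd hab.symm b'.2
          | inr j =>
            have h1 : w.1 = u i := tadj_inl_inr.mp ha
            have h2 : w.1 = u j := tadj_inl_inr.mp hb
            exact congrArg Sum.inr (hu (h1 ▸ h2))
      · intro y hy
        rw [SimpleGraph.mem_neighborSet] at hy
        by_cases hyv : y = v
        · have hwv : w.1 ∈ G.neighborSet v := by
            rw [SimpleGraph.mem_neighborSet]
            rw [hyv] at hy
            exact hy.symm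
          rw [hNv] at hwv
          obtain ⟨i, hi⟩ := hwv
          refine ⟨Sum.inr i, ?_, by rw [tproj_inr, hyv]⟩
          show (truncateVertex G v u).Adj (Sum.inl w) (Sum.inr i)
          exact tadj_inl_inr.mpr hi.symm
        · refine ⟨Sum.inl ⟨y, hyv⟩, ?_, rfl⟩
          show (truncateVertex G v u).Adj (Sum.inl w) (Sum.inl ⟨y, hyv⟩)
          exact tadj_inl_inl.mpr hy
    calc ((truncateVertex G v u).neighborSet (Sum.inl w)).ncard
        = (tproj v '' ((truncateVertex G v u).neighborSet (Sum.inl w))).ncard :=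
          (Set.ncard_image_of_injOn hbij.injOn).symm
      _ = (G.neighborSet w.1).ncard := by rw [hbij.image_eq]
      _ = 3 := hreg w.1
  | inr i =>
    have hbij : Set.BijOn (Sum.elim (fun _ => u i) u)
        ((truncateVertex G v u).neighborSet (Sum.inr i)) (G.neighborSet v) := by
      refine ⟨?_, ?_, ?_⟩
      · intro a ha
        cases a with
        | inl b => exact hadj i
        | inr j => exact hadj j
      · intro a ha b hb hab
        rw [SimpleGraph.mem_neighborSet] at ha hb
        cases a with
        | inl a' =>
          have h1 : a'.1 = u i := tadj_inr_inl.mp ha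
          cases b with
          | inl b' =>
            have h2 : b'.1 = u i := tadj_inr_inl.mp hb
            exact congrArg Sum.inl (Subtype.ext (h1.trans h2.symm))
          | inr j => exact absurd (hu hab) (tadj_inr_inr.mp hb)
        | inr j =>
          cases b with
          | inl b' => exact absurd (hu hab.symm) (tadj_inr_inr.mp ha)
          | inr k => exact congrArg Sum.inr (hu hab)
      · intro y hy
        rw [hNv] at hy
        obtain ⟨j, rfl⟩ := hy
        by_cases hij : j = i
        · subst hij
          refine ⟨Sum.inl ⟨u j, ui_ne_v hadj j⟩, ?_, rfl⟩
          show (truncateVertex G v u).Adj (Sum.inr j) (Sum.inl ⟨u j, ui_ne_v hadj j⟩)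
          exact tadj_inr_inl.mpr rfl
        · refine ⟨Sum.inr j, ?_, rfl⟩
          show (truncateVertex G v u).Adj (Sum.inr i) (Sum.inr j)
          exact tadj_inr_inr.mpr (Ne.symm hij)
    calc ((truncateVertex G v u).neighborSet (Sum.inr i)).ncard
        = (Sum.elim (fun _ => u i) u '' ((truncateVertex G v u).neighborSet (Sum.inr i))).ncard :=
          (Set.ncard_image_of_injOn hbij.injOn).symm
      _ = (G.neighborSet v).ncard := by rw [hbij.image_eq]
      _ = 3 := hreg v
end Reg
section Conn
variable {V : Type} [Fintype V] {G : SimpleGraph V} {v : V} {u : Fin 3 → V}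

lemma tconn (hu : Function.Injective u) (hadj : ∀ i, G.Adj v (u i))
    (hreg : ∀ x : V, (G.neighborSet x).ncard = 3) (h3 : ThreeConnected G) :
    ThreeConnected (truncateVertex G v u) := by
  classical
  obtain ⟨hc4, hcn⟩ := h3
  have hNv : G.neighborSet v = Set.range u := neighborSet_v_eq hu hadj (hreg v)
  constructor
  · rw [tcard_eq v hc4]; omega
  · intro s hs2
    set G' := truncateVertex G v u with hG'
    set s' : Set V := tproj v '' s with hs'def
    have hs'2 : s'.ncard ≤ 2 := le_trans (Set.ncard_image_le (Set.toFinite s)) hs2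
    have hGc : (G.induce s'ᶜ).Connected := hcn s' hs'2
    have hinl_not : ∀ a : {w : V // w ≠ v}, Sum.inl a ∈ sᶜ → a.1 ∈ s'ᶜ := by
      intro a ha hmem
      obtain ⟨b, hb, hpb⟩ := hmem
      cases b with
      | inl b' =>
        have : b' = a := Subtype.ext hpb
        exact ha (this ▸ hb)
      | inr i => exact a.2 ((tproj_inr i) ▸ hpb).symm
    have hinr_not : v ∈ s'ᶜ → ∀ i, Sum.inr i ∈ sᶜ := fun hv i hi => hv ⟨_, hi, rfl⟩
    -- L0 : lifts of the same vertex are reachable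
    have L0 : ∀ (a b : {x // x ∈ sᶜ}), tproj v a.1 = tproj v b.1 →
        (G'.induce sᶜ).Reachable a b := by
      rintro ⟨a, ha⟩ ⟨b, hb⟩ h
      cases a with
      | inl a₀ =>
        cases b with
        | inl b₀ =>
          have : a₀ = b₀ := Subtype.ext h
          subst this
          exact Reachable.refl _
        | inr j => exact absurd h a₀.2
      | inr i =>
        cases b with
        | inl b₀ => exact absurd h.symm b₀.2
        | inr j =>
          by_cases hij : i = j
          · subst hij; exact Reachable.refl _
          · have hadj' : (G'.induce sᶜ).Adj ⟨Sum.inr i, ha⟩ ⟨Sum.inr j, hb⟩ :=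
              (tadj_inr_inr (G := G) (v := v) (u := u)).mpr hij
            exact hadj'.reachable
    -- L1 : lifting walks of G to G'
    have L1 : ∀ (x y : {z // z ∈ s'ᶜ}), (G.induce s'ᶜ).Walk x y →
        ∀ (a : {z // z ∈ sᶜ}), tproj v a.1 = x.1 →
        ∃ b : {z // z ∈ sᶜ}, tproj v b.1 = y.1 ∧ (G'.induce sᶜ).Reachable a b := by
      intro x y w
      induction w with
      | nil => exact fun a hax => ⟨a, hax, Reachable.refl a⟩
      | @cons c d e h w ih =>
        intro a hax
        have hcd : G.Adj c.1 d.1 := h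
        obtain ⟨a0, hamem⟩ := a
        by_cases hd : d.1 = v
        · have hc_ne : c.1 ≠ v := fun hc => hcd.ne (hc.trans hd.symm)
          have hv' : v ∈ s'ᶜ := hd ▸ d.2
          cases a0 with
          | inr i =>
            have hax' : (v : V) = c.1 := hax
            exact absurd hax'.symm hc_ne
          | inl a₀ =>
            have hcv : G.Adj v c.1 := by
              have : G.Adj c.1 v := hd ▸ hcd
              exact this.symm
            have : c.1 ∈ Set.range u := by rw [← hNv]; exact hcv
            obtain ⟨i, hui⟩ := this
            have hbmem : Sum.inr i ∈ sᶜ := hinr_not hv' i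
            obtain ⟨b, hb1, hb2⟩ := ih ⟨Sum.inr i, hbmem⟩ (by exact hd.symm)
            have hax' : a₀.1 = c.1 := hax
            have hadj' : (G'.induce sᶜ).Adj ⟨Sum.inl a₀, hamem⟩ ⟨Sum.inr i, hbmem⟩ :=
              (tadj_inl_inr (G := G) (v := v) (u := u)).mpr (by rw [hax', ← hui])
            exact ⟨b, hb1, hadj'.reachable.trans hb2⟩
        · have hbmem : Sum.inl ⟨d.1, hd⟩ ∈ sᶜ := fun hmem => d.2 ⟨_, hmem, rfl⟩
          obtain ⟨b, hb1, hb2⟩ := ih ⟨Sum.inl ⟨d.1, hd⟩, hbmem⟩ rfl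
          cases a0 with
          | inl a₀ =>
            have hax' : a₀.1 = c.1 := hax
            have hadj' : (G'.induce sᶜ).Adj ⟨Sum.inl a₀, hamem⟩ ⟨Sum.inl ⟨d.1, hd⟩, hbmem⟩ :=
              (tadj_inl_inl (G := G) (v := v) (u := u)).mpr
                (show G.Adj a₀.1 d.1 by rw [hax']; exact hcd)
            exact ⟨b, hb1, hadj'.reachable.trans hb2⟩
          | inr i =>
            have hax' : (v : V) = c.1 := hax
            have hv' : v ∈ s'ᶜ := by rw [hax']; exact c.2
            have hvd : G.Adj v d.1 := by rw [hax']; exact hcd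
            have : d.1 ∈ Set.range u := by rw [← hNv]; exact hvd
            obtain ⟨j, huj⟩ := this
            have hjmem : Sum.inr j ∈ sᶜ := hinr_not hv' j
            have step1 : (G'.induce sᶜ).Reachable ⟨Sum.inr i, hamem⟩ ⟨Sum.inr j, hjmem⟩ := by
              by_cases hij : i = j
              · subst hij; exact Reachable.refl _
              · exact (Adj.reachable ((tadj_inr_inr (G := G) (v := v) (u := u)).mpr hij :
                  (G'.induce sᶜ).Adj ⟨Sum.inr i, hamem⟩ ⟨Sum.inr j, hjmem⟩))
            have step2 : (G'.induce sᶜ).Adj ⟨Sum.inr j, hjmem⟩ ⟨Sum.inl ⟨d.1, hd⟩, hbmem⟩ :=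
              (tadj_inr_inl (G := G) (v := v) (u := u)).mpr huj.symm
            exact ⟨b, hb1, (step1.trans step2.reachable).trans hb2⟩
    -- Normalisation : every surviving vertex reaches one whose projection survives
    have N : ∀ a : {z // z ∈ sᶜ}, ∃ b : {z // z ∈ sᶜ},
        tproj v b.1 ∈ s'ᶜ ∧ (G'.induce sᶜ).Reachable a b := by
      rintro ⟨a0, hamem⟩
      cases a0 with
      | inl a₀ => exact ⟨⟨Sum.inl a₀, hamem⟩, hinl_not a₀ hamem, Reachable.refl _⟩
      | inr i =>
        by_cases hv' : v ∈ s'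
        · -- find a good index m
          set K : Set (Fin 3) := {m | Sum.inr m ∈ s ∨ Sum.inl ⟨u m, ui_ne_v hadj m⟩ ∈ s} with hK
          have hKcard : K.ncard ≤ s.ncard := by
            apply Set.ncard_le_ncard_of_injOn
              (fun m => if Sum.inr m ∈ s then (Sum.inr m : {w : V // w ≠ v} ⊕ Fin 3)
                else Sum.inl ⟨u m, ui_ne_v hadj m⟩)
            · intro m hm
              by_cases h1 : Sum.inr m ∈ s
              · simp only [if_pos h1]; exact h1
              · simp only [if_neg h1]
                rcases hm with h2 | h2
                · exact absurd h2 h1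
                · exact h2
            · intro m hm m' hm' hmm
              dsimp only at hmm
              by_cases h1 : Sum.inr m ∈ s
              · by_cases h2 : Sum.inr m' ∈ s
                · rw [if_pos h1, if_pos h2] at hmm; exact Sum.inr.inj hmm
                · rw [if_pos h1, if_neg h2] at hmm; exact absurd hmm (by simp)
              · by_cases h2 : Sum.inr m' ∈ s
                · rw [if_neg h1, if_pos h2] at hmm; exact absurd hmm (by simp)
                · rw [if_neg h1, if_neg h2] at hmm
                  exact hu (Subtype.ext_iff.mp (Sum.inl.inj hmm))
          have hKne : K ≠ Set.univ := by
            intro hKu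
            have : (Set.univ : Set (Fin 3)).ncard = 3 := by
              rw [Set.ncard_univ]; simp
            rw [hKu, this] at hKcard
            omega
          have : ∃ m, m ∉ K := by
            by_contra hmm
            push_neg at hmm
            exact hKne (Set.eq_univ_of_forall hmm)
          obtain ⟨m, hm⟩ := this
          rw [hK, Set.mem_setOf_eq] at hm
          push_neg at hm
          obtain ⟨hm1, hm2⟩ := hm
          have hum_mem : (Sum.inl ⟨u m, ui_ne_v hadj m⟩ : {w : V // w ≠ v} ⊕ Fin 3) ∈ sᶜ := hm2
          refine ⟨⟨Sum.inl ⟨u m, ui_ne_v hadj m⟩, hum_mem⟩, hinl_not _ hum_mem, ?_⟩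
          have step1 : (G'.induce sᶜ).Reachable ⟨Sum.inr i, hamem⟩ ⟨Sum.inr m, hm1⟩ := by
            by_cases him : i = m
            · subst him; exact Reachable.refl _
            · exact (Adj.reachable ((tadj_inr_inr (G := G) (v := v) (u := u)).mpr him :
                (G'.induce sᶜ).Adj ⟨Sum.inr i, hamem⟩ ⟨Sum.inr m, hm1⟩))
          have step2 : (G'.induce sᶜ).Adj ⟨Sum.inr m, hm1⟩ ⟨Sum.inl ⟨u m, ui_ne_v hadj m⟩, hum_mem⟩ :=
            (tadj_inr_inl (G := G) (v := v) (u := u)).mpr rfl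
          exact step1.trans step2.reachable
        · exact ⟨⟨Sum.inr i, hamem⟩, hv', Reachable.refl _⟩
    rw [connected_iff]
    constructor
    · intro a b
      obtain ⟨a', ha', ra⟩ := N a
      obtain ⟨b', hb', rb⟩ := N b
      obtain ⟨w⟩ := hGc.preconnected ⟨tproj v a'.1, ha'⟩ ⟨tproj v b'.1, hb'⟩
      obtain ⟨b'', hb''1, hb''2⟩ := L1 _ _ w a' rfl
      exact ((ra.trans hb''2).trans (L0 b'' b' hb''1)).trans rb.symm
    · have : ∃ x : {w : V // w ≠ v} ⊕ Fin 3, x ∉ s := by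
        by_contra hx
        push_neg at hx
        have hsu : s = Set.univ := Set.eq_univ_of_forall hx
        have : s.ncard = Nat.card V + 2 := by rw [hsu, Set.ncard_univ, tcard_eq v hc4]
        omega
      obtain ⟨x, hx⟩ := this
      exact ⟨⟨x, hx⟩⟩
end Conn
section Minor1
variable {V : Type} {G : SimpleGraph V} {v : V} {u : Fin 3 → V}

/-- the `V`-part of a branch set, projected down. -/
def tA (v : V) (s : Set ({w : V // w ≠ v} ⊕ Fin 3)) : Set V :=
  tproj v '' (s \ Set.range Sum.inr)

lemma v_notin_tA {s : Set ({w : V // w ≠ v} ⊕ Fin 3)} : v ∉ tA v s := by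
  rintro ⟨y, ⟨hy, hyr⟩, hpy⟩
  cases y with
  | inl a => exact a.2 hpy
  | inr i => exact hyr ⟨i, rfl⟩

lemma mem_tA_of_inl {s : Set ({w : V // w ≠ v} ⊕ Fin 3)} {a : {w : V // w ≠ v}}
    (ha : Sum.inl a ∈ s) : a.1 ∈ tA v s :=
  ⟨Sum.inl a, ⟨ha, by simp⟩, rfl⟩

lemma tA_subset_img {s : Set ({w : V // w ≠ v} ⊕ Fin 3)} : tA v s ⊆ tproj v '' s := by
  rintro x ⟨y, ⟨hy, _⟩, rfl⟩
  exact ⟨y, hy, rfl⟩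

lemma mem_tA_elim {s : Set ({w : V // w ≠ v} ⊕ Fin 3)} {x : V} (hx : x ∈ tA v s) :
    ∃ a : {w : V // w ≠ v}, Sum.inl a ∈ s ∧ a.1 = x := by
  obtain ⟨y, ⟨hy, hyr⟩, rfl⟩ := hx
  cases y with
  | inl a => exact ⟨a, hy, rfl⟩
  | inr i => exact absurd ⟨i, rfl⟩ hyr

lemma tA_disj {s t : Set ({w : V // w ≠ v} ⊕ Fin 3)} (h : Disjoint s t) :
    Disjoint (tA v s) (tA v t) := by
  rw [Set.disjoint_left]
  intro x hxs hxt
  obtain ⟨a, ha, hax⟩ := mem_tA_elim hxs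
  obtain ⟨b, hb, hbx⟩ := mem_tA_elim hxt
  have : a = b := Subtype.ext (hax.trans hbx.symm)
  subst this
  exact Set.disjoint_left.mp h ha hb

lemma img_tA_disj {s t : Set ({w : V // w ≠ v} ⊕ Fin 3)} (h : Disjoint s t)
    (hT : ∀ j, Sum.inr j ∉ t) : Disjoint (tproj v '' s) (tA v t) := by
  rw [Set.disjoint_left]
  rintro x ⟨y, hy, rfl⟩ hxt
  obtain ⟨b, hb, hbx⟩ := mem_tA_elim hxt
  cases y with
  | inl a =>
    have : a = b := Subtype.ext hbx.symm
    subst this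
    exact Set.disjoint_left.mp h hy hb
  | inr i => exact b.2 hbx

lemma conn_img (hadj : ∀ i, G.Adj v (u i)) {s : Set ({w : V // w ≠ v} ⊕ Fin 3)}
    (hconn : ((truncateVertex G v u).induce s).Connected) :
    (G.induce (tproj v '' s)).Connected :=
  induce_conn_map (tproj v) s (fun a _ b _ h => tproj_hom hadj h) hconn

lemma conn_minusT (hadj : ∀ i, G.Adj v (u i)) {s : Set ({w : V // w ≠ v} ⊕ Fin 3)}
    (hconn : ((truncateVertex G v u).induce s).Connected)
    (hgood : ∀ j, Sum.inr j ∈ s →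
      Sum.inl ⟨u j, ui_ne_v hadj j⟩ ∈ s ∧ ∀ j', Sum.inr j' ∈ s → j' = j) :
    (G.induce (tA v s)).Connected := by
  classical
  by_cases hT : ∃ j, Sum.inr j ∈ s
  · obtain ⟨i, hi⟩ := hT
    obtain ⟨hui, huniq⟩ := hgood i hi
    set q : ({w : V // w ≠ v} ⊕ Fin 3) → ({w : V // w ≠ v} ⊕ Fin 3) :=
      fun x => if x = Sum.inr i then Sum.inl ⟨u i, ui_ne_v hadj i⟩ else x with hqdef
    have himg : q '' s = s \ Set.range Sum.inr := by
      ext x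
      constructor
      · rintro ⟨y, hy, rfl⟩
        by_cases hyi : y = Sum.inr i
        · subst hyi
          rw [hqdef]; simp only [if_pos rfl]
          exact ⟨hui, by simp⟩
        · rw [hqdef]; simp only [if_neg hyi]
          refine ⟨hy, ?_⟩
          rintro ⟨j, rfl⟩
          exact hyi (by rw [huniq j hy])
      · rintro ⟨hx, hxr⟩
        have hxi : x ≠ Sum.inr i := fun h => hxr (h ▸ ⟨i, rfl⟩)
        exact ⟨x, hx, by rw [hqdef]; simp only [if_neg hxi]⟩
    have hq : ∀ a ∈ s, ∀ b ∈ s, (truncateVertex G v u).Adj a b →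
        (truncateVertex G v u).Adj (q a) (q b) ∨ q a = q b := by
      intro a ha b hb hA
      by_cases hai : a = Sum.inr i
      · by_cases hbi : b = Sum.inr i
        · exact absurd (hai.trans hbi.symm) hA.ne
        · subst hai
          cases b with
          | inl z =>
            right
            rw [hqdef]; simp only [if_pos rfl, if_neg hbi]
            exact congrArg Sum.inl (Subtype.ext (tadj_inr_inl.mp hA).symm)
          | inr j => exact absurd (show (Sum.inr j : {w : V // w ≠ v} ⊕ Fin 3) = Sum.inr i by
              rw [huniq j hb]) hbi
      · by_cases hbi : b = Sum.inr i
        · subst hbi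
          cases a with
          | inl z =>
            right
            rw [hqdef]; simp only [if_pos rfl, if_neg hai]
            exact congrArg Sum.inl (Subtype.ext (tadj_inl_inr.mp hA))
          | inr j => exact absurd (show (Sum.inr j : {w : V // w ≠ v} ⊕ Fin 3) = Sum.inr i by
              rw [huniq j ha]) hai
        · left
          rw [hqdef]; simp only [if_neg hai, if_neg hbi]
          exact hA
    have h1 := induce_conn_map q s hq hconn
    rw [himg] at h1
    exact induce_conn_map (tproj v) (s \ Set.range Sum.inr)
      (fun a _ b _ h => tproj_hom hadj h) h1
  · have hseq : s \ Set.range Sum.inr = s := by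
      ext x
      refine ⟨fun h => h.1, fun h => ⟨h, ?_⟩⟩
      rintro ⟨j, rfl⟩
      exact hT ⟨j, h⟩
    show (G.induce (tproj v '' (s \ Set.range Sum.inr))).Connected
    rw [hseq]
    exact conn_img hadj hconn
end Minor1
section Minor2
variable {V : Type} {G : SimpleGraph V} {v : V} {u : Fin 3 → V}

lemma build_minor {W : Type} (H : SimpleGraph W)
    (hu : Function.Injective u) (hadj : ∀ i, G.Adj v (u i))
    (f : W → Set ({w : V // w ≠ v} ⊕ Fin 3))
    (hne : ∀ w, (f w).Nonempty)
    (hconn : ∀ w, ((truncateVertex G v u).induce (f w)).Connected)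
    (hdisj : ∀ w w', w ≠ w' → Disjoint (f w) (f w'))
    (hedge : ∀ w w', H.Adj w w' → ∃ x ∈ f w, ∃ y ∈ f w', (truncateVertex G v u).Adj x y)
    (ws : W)
    (hC1 : ∀ w, w ≠ ws → ∀ i, Sum.inr i ∈ f w → Sum.inl ⟨u i, ui_ne_v hadj i⟩ ∈ f w)
    (hC2 : ∀ w, w ≠ ws → ∀ i j, Sum.inr i ∈ f w → Sum.inr j ∈ f w → i = j)
    (hC3 : ∀ w w', w ≠ ws → w' ≠ ws → w ≠ w' → H.Adj w w' →
      ∀ i j, Sum.inr i ∈ f w → Sum.inr j ∈ f w' →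
      ∃ x ∈ f w, ∃ y ∈ f w', x ∉ Set.range Sum.inr ∧ y ∉ Set.range Sum.inr ∧
        (truncateVertex G v u).Adj x y) :
    GraphMinor H G := by
  classical
  refine ⟨fun w => if w = ws then tproj v '' f w else tA v (f w), ?_, ?_, ?_, ?_⟩
  · intro w
    dsimp only
    by_cases hws : w = ws
    · rw [if_pos hws]
      exact (hne w).image _
    · rw [if_neg hws]
      by_cases hT : ∃ i, Sum.inr i ∈ f w
      · obtain ⟨i, hi⟩ := hT
        exact ⟨u i, mem_tA_of_inl (hC1 w hws i hi)⟩
      · obtain ⟨x, hx⟩ := hne w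
        cases x with
        | inl a => exact ⟨a.1, mem_tA_of_inl hx⟩
        | inr i => exact absurd ⟨i, hx⟩ hT
  · intro w
    dsimp only
    by_cases hws : w = ws
    · rw [if_pos hws]
      exact conn_img hadj (hconn w)
    · rw [if_neg hws]
      refine conn_minusT hadj (hconn w) ?_
      intro j hj
      exact ⟨hC1 w hws j hj, fun j' hj' => hC2 w hws j' j hj' hj⟩
  · intro w w' hww
    dsimp only
    by_cases hws : w = ws
    · subst hws
      rw [if_pos rfl, if_neg (Ne.symm hww)]
      rw [Set.disjoint_left]
      intro x hx hx'
      obtain ⟨b, hb, hbx⟩ := mem_tA_elim hx'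
      obtain ⟨y, hy, hyx⟩ := hx
      cases y with
      | inl a =>
        have : a = b := Subtype.ext (by rw [hbx]; exact hyx)
        subst this
        exact Set.disjoint_left.mp (hdisj _ _ hww) hy hb
      | inr i => exact b.2 (by rw [hbx, ← hyx]; rfl)
    · rw [if_neg hws]
      by_cases hws' : w' = ws
      · rw [if_pos hws']
        subst hws'
        rw [disjoint_comm, Set.disjoint_left]
        intro x hx hx'
        obtain ⟨b, hb, hbx⟩ := mem_tA_elim hx'
        obtain ⟨y, hy, hyx⟩ := hx
        cases y with
        | inl a =>
          have : a = b := Subtype.ext (by rw [hbx]; exact hyx)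
          subst this
          exact Set.disjoint_left.mp (hdisj _ _ hww) hb hy
        | inr i => exact b.2 (by rw [hbx, ← hyx]; rfl)
      · rw [if_neg hws']
        exact tA_disj (hdisj _ _ hww)
  · intro w w' hH
    dsimp only
    have hww : w ≠ w' := hH.ne
    obtain ⟨x, hx, y, hy, hxy⟩ := hedge w w' hH
    have memg : ∀ (w'' : W) (a : {z : V // z ≠ v}), Sum.inl a ∈ f w'' →
        a.1 ∈ (if w'' = ws then tproj v '' f w'' else tA v (f w'')) := by
      intro w'' a ha
      by_cases h : w'' = ws
      · rw [if_pos h]; exact ⟨Sum.inl a, ha, rfl⟩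
      · rw [if_neg h]; exact mem_tA_of_inl ha
    cases x with
    | inl a =>
      cases y with
      | inl b =>
        exact ⟨a.1, memg w a hx, b.1, memg w' b hy, tadj_inl_inl.mp hxy⟩
      | inr j =>
        have hauj : a.1 = u j := tadj_inl_inr.mp hxy
        by_cases hws' : w' = ws
        · subst hws'
          refine ⟨a.1, memg w a hx, v, ?_, ?_⟩
          · rw [if_pos rfl]; exact ⟨Sum.inr j, hy, rfl⟩
          · rw [hauj]; exact (hadj j).symm
        · have : Sum.inl (⟨u j, ui_ne_v hadj j⟩ : {z : V // z ≠ v}) ∈ f w' := hC1 w' hws' j hy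
          have ha' : (⟨u j, ui_ne_v hadj j⟩ : {z : V // z ≠ v}) = a := Subtype.ext hauj.symm
          rw [ha'] at this
          exact (Set.disjoint_left.mp (hdisj w w' hww) hx this).elim
    | inr i =>
      cases y with
      | inl b =>
        have hbui : b.1 = u i := tadj_inr_inl.mp hxy
        by_cases hws' : w = ws
        · subst hws'
          refine ⟨v, ?_, b.1, memg w' b hy, ?_⟩
          · rw [if_pos rfl]; exact ⟨Sum.inr i, hx, rfl⟩
          · rw [hbui]; exact hadj i
        · have : Sum.inl (⟨u i, ui_ne_v hadj i⟩ : {z : V // z ≠ v}) ∈ f w := hC1 w hws' i hx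
          have hb' : (⟨u i, ui_ne_v hadj i⟩ : {z : V // z ≠ v}) = b := Subtype.ext hbui.symm
          rw [hb'] at this
          exact (Set.disjoint_left.mp (hdisj w w' hww) this hy).elim
      | inr j =>
        by_cases hws1 : w = ws
        · subst hws1
          have hws2 : w' ≠ w := Ne.symm hww
          refine ⟨v, ?_, u j, ?_, hadj j⟩
          · rw [if_pos rfl]; exact ⟨Sum.inr i, hx, rfl⟩
          · exact memg w' _ (hC1 w' hws2 j hy)
        · by_cases hws2 : w' = ws
          · subst hws2
            refine ⟨u i, memg w _ (hC1 w hws1 i hx), v, ?_, (hadj i).symm⟩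
            rw [if_pos rfl]; exact ⟨Sum.inr j, hy, rfl⟩
          · obtain ⟨x', hx', y', hy', hxr, hyr, hxy'⟩ :=
              hC3 w w' hws1 hws2 hww hH i j hx hy
            cases x' with
            | inr i' => exact absurd ⟨i', rfl⟩ hxr
            | inl a' =>
              cases y' with
              | inr j' => exact absurd ⟨j', rfl⟩ hyr
              | inl b' =>
                exact ⟨a'.1, memg w a' hx', b'.1, memg w' b' hy', tadj_inl_inl.mp hxy'⟩
end Minor2
section Minor3
variable {V : Type} {G : SimpleGraph V} {v : V} {u : Fin 3 → V}

lemma fin3_pigeon : ∀ (i j a b : Fin 3), i ≠ j → a ≠ b → a ≠ i → a ≠ j → b ≠ i → b ≠ j → False := by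
  decide

lemma fin3_cover : ∀ (i j c x : Fin 3), i ≠ j → c ≠ i → c ≠ j → x ≠ c → (x = i ∨ x = j) := by
  decide

lemma fin3_cover3 : ∀ (a b c x : Fin 3), a ≠ b → a ≠ c → b ≠ c → (x = a ∨ x = b ∨ x = c) := by
  decide

lemma pigeon_finset {α : Type} [DecidableEq α] {n : ℕ} (S : Finset α) (z : Fin n → α)
    (hinj : Function.Injective z) (hmem : ∀ m, z m ∈ S) (h : S.card < n) : False := by
  have h1 : (Finset.univ : Finset (Fin n)).card ≤ S.card :=
    Finset.card_le_card_of_injOn z (fun m _ => hmem m) hinj.injOn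
  rw [Finset.card_univ, Fintype.card_fin] at h1
  omega

/-- the pair `a b` of branch sets has a witness avoiding the triangle. -/
def OKpair (G : SimpleGraph V) (v : V) (u : Fin 3 → V) {W : Type} (H : SimpleGraph W)
    (f : W → Set ({w : V // w ≠ v} ⊕ Fin 3)) (a b : W) : Prop :=
  H.Adj a b → ∃ x ∈ f a, ∃ y ∈ f b, x ∉ Set.range Sum.inr ∧ y ∉ Set.range Sum.inr ∧
    (truncateVertex G v u).Adj x y

lemma OKpair.symm {W : Type} {H : SimpleGraph W} {f : W → Set ({w : V // w ≠ v} ⊕ Fin 3)}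
    {a b : W} (h : OKpair G v u H f a b) : OKpair G v u H f b a := by
  intro hH
  obtain ⟨x, hx, y, hy, hxr, hyr, hxy⟩ := h hH.symm
  exact ⟨y, hy, x, hx, hyr, hxr, hxy.symm⟩

lemma no_minor {W : Type} [Nonempty W] (H : SimpleGraph W)
    (hu : Function.Injective u) (hadj : ∀ i, G.Adj v (u i))
    (hdeg : ∀ w : W, ∃ y : Fin 3 → W, Function.Injective y ∧ ∀ m, H.Adj w (y m))
    (hside : (∀ a b c : W, H.Adj a b → H.Adj a c → H.Adj b c → False) ∨
        ((∀ w : W, ∃ y : Fin 4 → W, Function.Injective y ∧ ∀ m, H.Adj w (y m)) ∧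
         (∀ a b c : W, a ≠ b → a ≠ c → b ≠ c → ∃ d e : W, d ≠ e ∧ d ≠ a ∧ d ≠ b ∧ d ≠ c ∧
           e ≠ a ∧ e ≠ b ∧ e ≠ c ∧ H.Adj d a ∧ H.Adj d b ∧ H.Adj d c ∧
           H.Adj e a ∧ H.Adj e b ∧ H.Adj e c)))
    (hmin : GraphMinor H (truncateVertex G v u)) :
    GraphMinor H G ∨ GraphMinor (completeBipartiteGraph (Fin 3) (Fin 3)) G := by
  classical
  obtain ⟨f, hne, hconn, hdisj, hedge⟩ := hmin
  have huniq : ∀ (i : Fin 3) (w w' : W), Sum.inr i ∈ f w → Sum.inr i ∈ f w' → w = w' := by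
    intro i w w' hi hi'
    by_contra hne'
    exact Set.disjoint_left.mp (hdisj w w' hne') hi hi'
  have hsing : ∀ (w : W) (k : Fin 3), Sum.inr k ∈ f w →
      Sum.inl ⟨u k, ui_ne_v hadj k⟩ ∉ f w → (∀ j, Sum.inr j ∈ f w → j = k) →
      f w = {Sum.inr k} := by
    intro w k hk hnl huk
    refine Set.eq_singleton_iff_unique_mem.mpr ⟨hk, ?_⟩
    intro x hx
    by_contra hxk
    obtain ⟨z, hz, hadjz⟩ := exists_adj_of_conn (hconn w) hk hx (Ne.symm hxk)
    cases z with
    | inl b =>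
      have hb : b = ⟨u k, ui_ne_v hadj k⟩ := Subtype.ext (tadj_inr_inl.mp hadjz)
      exact hnl (hb ▸ hz)
    | inr j =>
      exact (tadj_inr_inr.mp hadjz) (huk j hz).symm
  have hanaly : ∀ (w₀ : W) (k : Fin 3), f w₀ = {Sum.inr k} →
      ∃ (a b : W) (i j : Fin 3), a ≠ b ∧ a ≠ w₀ ∧ b ≠ w₀ ∧ H.Adj w₀ a ∧ H.Adj w₀ b ∧
        Sum.inr i ∈ f a ∧ Sum.inr j ∈ f b ∧ i ≠ k ∧ j ≠ k ∧ i ≠ j := by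
    intro w₀ k hfw
    obtain ⟨y, hyinj, hyadj⟩ := hdeg w₀
    have hzex : ∀ m, ∃ z ∈ f (y m), (truncateVertex G v u).Adj (Sum.inr k) z := by
      intro m
      obtain ⟨x, hx, z, hz, hxz⟩ := hedge w₀ (y m) (hyadj m)
      rw [hfw, Set.mem_singleton_iff] at hx
      subst hx
      exact ⟨z, hz, hxz⟩
    choose z hzmem hzadj using hzex
    have hyne : ∀ m, y m ≠ w₀ := fun m h => (hyadj m).ne h.symm
    have hzinj : ∀ m m', m ≠ m' → z m ≠ z m' := by
      intro m m' hmm heq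
      exact Set.disjoint_left.mp (hdisj (y m) (y m') (fun h => hmm (hyinj h)))
        (hzmem m) (heq ▸ hzmem m')
    have hform : ∀ m, z m = Sum.inl ⟨u k, ui_ne_v hadj k⟩ ∨ ∃ i, z m = Sum.inr i ∧ i ≠ k := by
      intro m
      have hA := hzadj m
      cases hzm : z m with
      | inl b =>
        rw [hzm] at hA
        left
        exact congrArg Sum.inl (Subtype.ext (tadj_inr_inl.mp hA))
      | inr i =>
        rw [hzm] at hA
        right
        exact ⟨i, rfl, Ne.symm (tadj_inr_inr.mp hA)⟩
    have key : ∃ m₁ m₂ : Fin 3, m₁ ≠ m₂ ∧ (∃ i, z m₁ = Sum.inr i ∧ i ≠ k) ∧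
        (∃ j, z m₂ = Sum.inr j ∧ j ≠ k) := by
      rcases hform 0 with h0 | h0
      · rcases hform 1 with h1 | h1
        · exact absurd (h0.trans h1.symm) (hzinj 0 1 (by decide))
        · rcases hform 2 with h2 | h2
          · exact absurd (h0.trans h2.symm) (hzinj 0 2 (by decide))
          · exact ⟨1, 2, by decide, h1, h2⟩
      · rcases hform 1 with h1 | h1
        · rcases hform 2 with h2 | h2
          · exact absurd (h1.trans h2.symm) (hzinj 1 2 (by decide))
          · exact ⟨0, 2, by decide, h0, h2⟩
        · exact ⟨0, 1, by decide, h0, h1⟩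
    obtain ⟨m₁, m₂, hm, ⟨i, hzi, hik⟩, ⟨j, hzj, hjk⟩⟩ := key
    refine ⟨y m₁, y m₂, i, j, fun h => hm (hyinj h), hyne m₁, hyne m₂, hyadj m₁, hyadj m₂,
      hzi ▸ hzmem m₁, hzj ▸ hzmem m₂, hik, hjk, ?_⟩
    intro hijeq
    refine hzinj m₁ m₂ hm ?_
    rw [hzi, hzj, hijeq]
  by_cases hM : ∃ w i j, i ≠ j ∧ Sum.inr i ∈ f w ∧ Sum.inr j ∈ f w
  · obtain ⟨w₀, i, j, hij, hi, hj⟩ := hM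
    left
    have hC2 : ∀ w, w ≠ w₀ → ∀ a b, Sum.inr a ∈ f w → Sum.inr b ∈ f w → a = b := by
      intro w hw a b ha hb
      by_contra hab
      have hai : a ≠ i := fun h => hw (huniq a w w₀ ha (by rw [h]; exact hi))
      have haj : a ≠ j := fun h => hw (huniq a w w₀ ha (by rw [h]; exact hj))
      have hbi : b ≠ i := fun h => hw (huniq b w w₀ hb (by rw [h]; exact hi))
      have hbj : b ≠ j := fun h => hw (huniq b w w₀ hb (by rw [h]; exact hj))
      exact fin3_pigeon i j a b hij hab hai haj hbi hbj
    have hC1 : ∀ w, w ≠ w₀ → ∀ c, Sum.inr c ∈ f w → Sum.inl ⟨u c, ui_ne_v hadj c⟩ ∈ f w := by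
      intro w hw c hc
      by_contra hnl
      have hfw : f w = {Sum.inr c} := hsing w c hc hnl (fun j' hj' => hC2 w hw j' c hj' hc)
      obtain ⟨a, b, i', j', hab, haw, hbw, hHa, hHb, hia, hjb, hik, hjk, hij'⟩ := hanaly w c hfw
      have hci : c ≠ i := fun h => hw (huniq c w w₀ hc (by rw [h]; exact hi))
      have hcj : c ≠ j := fun h => hw (huniq c w w₀ hc (by rw [h]; exact hj))
      have h1 : i' = i ∨ i' = j := fin3_cover i j c i' hij hci hcj hik
      have h2 : j' = i ∨ j' = j := fin3_cover i j c j' hij hci hcj hjk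
      have ha0 : a = w₀ := by
        rcases h1 with h | h
        · exact huniq i' a w₀ hia (by rw [h]; exact hi)
        · exact huniq i' a w₀ hia (by rw [h]; exact hj)
      have hb0 : b = w₀ := by
        rcases h2 with h | h
        · exact huniq j' b w₀ hjb (by rw [h]; exact hi)
        · exact huniq j' b w₀ hjb (by rw [h]; exact hj)
      exact hab (ha0.trans hb0.symm)
    refine build_minor H hu hadj f hne hconn hdisj hedge w₀ hC1 hC2 ?_
    intro w w' hw hw' hww hH' a b ha hb
    exfalso
    have hab : a ≠ b := fun h => hww (huniq a w w' ha (by rw [h]; exact hb))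
    have hai : a ≠ i := fun h => hw (huniq a w w₀ ha (by rw [h]; exact hi))
    have haj : a ≠ j := fun h => hw (huniq a w w₀ ha (by rw [h]; exact hj))
    have hbi : b ≠ i := fun h => hw' (huniq b w' w₀ hb (by rw [h]; exact hi))
    have hbj : b ≠ j := fun h => hw' (huniq b w' w₀ hb (by rw [h]; exact hj))
    exact fin3_pigeon i j a b hij hab hai haj hbi hbj
  · have hC2g : ∀ w a b, Sum.inr a ∈ f w → Sum.inr b ∈ f w → a = b := by
      intro w a b ha hb
      by_contra hab
      exact hM ⟨w, a, b, hab, ha, hb⟩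
    by_cases hS : ∃ w k, f w = {Sum.inr k}
    · obtain ⟨w₀, k, hw₀⟩ := hS
      have hkmem : Sum.inr k ∈ f w₀ := by rw [hw₀]; exact rfl
      rcases hside with htri | ⟨hdeg4, hext⟩
      · obtain ⟨a, b, i, j, hab, haw, hbw, hHa, hHb, hia, hjb, hik, hjk, hij⟩ := hanaly w₀ k hw₀
        left
        have hC1 : ∀ w, w ≠ w₀ → ∀ c, Sum.inr c ∈ f w →
            Sum.inl ⟨u c, ui_ne_v hadj c⟩ ∈ f w := by
          intro w hw c hc
          by_contra hnl
          have hfw : f w = {Sum.inr c} := hsing w c hc hnl (fun j' hj' => hC2g w j' c hj' hc)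
          obtain ⟨a', b', i', j', hab', haw', hbw', hHa', hHb', hia', hjb', hik', hjk', hij'⟩ :=
            hanaly w c hfw
          have hck : c ≠ k := fun h => hw (huniq c w w₀ hc (by rw [h]; exact hkmem))
          have hc' : c = i ∨ c = j := fin3_cover i j k c hij (Ne.symm hik) (Ne.symm hjk) hck
          rcases hc' with hc' | hc'
          · have hwa : w = a := huniq c w a hc (by rw [hc']; exact hia)
            have h1 : i' = k ∨ i' = j := fin3_cover k j c i' (Ne.symm hjk) hck (hc' ▸ hij) hik'
            rcases h1 with h1 | h1
            · have hj2 : j' = j := by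
                rcases fin3_cover k j c j' (Ne.symm hjk) hck (hc' ▸ hij) hjk' with h2 | h2
                · exact absurd (h1.trans h2.symm) hij'
                · exact h2
              have hb' : b' = b := huniq j' b' b hjb' (by rw [hj2]; exact hjb)
              exact htri w₀ a b hHa hHb (by rw [← hwa, ← hb']; exact hHb')
            · have ha' : a' = b := huniq i' a' b hia' (by rw [h1]; exact hjb)
              exact htri w₀ a b hHa hHb (by rw [← hwa, ← ha']; exact hHa')
          · have hwb : w = b := huniq c w b hc (by rw [hc']; exact hjb)
            have h1 : i' = k ∨ i' = i := fin3_cover k i c i'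
              (Ne.symm hik) hck (hc' ▸ (Ne.symm hij)) hik'
            rcases h1 with h1 | h1
            · have hj2 : j' = i := by
                rcases fin3_cover k i c j' (Ne.symm hik) hck (hc' ▸ (Ne.symm hij)) hjk' with h2 | h2
                · exact absurd (h1.trans h2.symm) hij'
                · exact h2
              have hb' : b' = a := huniq j' b' a hjb' (by rw [hj2]; exact hia)
              exact htri w₀ a b hHa hHb (Adj.symm (by rw [← hwb, ← hb']; exact hHb'))
            · have ha' : a' = a := huniq i' a' a hia' (by rw [h1]; exact hia)
              exact htri w₀ a b hHa hHb (Adj.symm (by rw [← hwb, ← ha']; exact hHa'))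
        refine build_minor H hu hadj f hne hconn hdisj hedge w₀ hC1 (fun w hw => hC2g w) ?_
        intro w w' hw hw' hww hH' c d hc hd
        exfalso
        have hck : c ≠ k := fun h => hw (huniq c w w₀ hc (by rw [h]; exact hkmem))
        have hdk : d ≠ k := fun h => hw' (huniq d w' w₀ hd (by rw [h]; exact hkmem))
        have hcd : c ≠ d := fun h => hww (huniq c w w' hc (by rw [h]; exact hd))
        have hc' : c = i ∨ c = j := fin3_cover i j k c hij (Ne.symm hik) (Ne.symm hjk) hck
        have hd' : d = i ∨ d = j := fin3_cover i j k d hij (Ne.symm hik) (Ne.symm hjk) hdk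
        rcases hc' with hc' | hc' <;> rcases hd' with hd' | hd'
        · exact hcd (hc'.trans hd'.symm)
        · have hwa : w = a := huniq c w a hc (by rw [hc']; exact hia)
          have hwb : w' = b := huniq d w' b hd (by rw [hd']; exact hjb)
          exact htri w₀ a b hHa hHb (by rw [← hwa, ← hwb]; exact hH')
        · have hwb : w = b := huniq c w b hc (by rw [hc']; exact hjb)
          have hwa : w' = a := huniq d w' a hd (by rw [hd']; exact hia)
          exact htri w₀ a b hHa hHb (Adj.symm (by rw [← hwb, ← hwa]; exact hH'))
        · exact hcd (hc'.trans hd'.symm)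
      · exfalso
        obtain ⟨y, hyinj, hyadj⟩ := hdeg4 w₀
        have hzex : ∀ m, ∃ z ∈ f (y m), (truncateVertex G v u).Adj (Sum.inr k) z := by
          intro m
          obtain ⟨x, hx, z, hz, hxz⟩ := hedge w₀ (y m) (hyadj m)
          rw [hw₀, Set.mem_singleton_iff] at hx
          subst hx
          exact ⟨z, hz, hxz⟩
        choose z hzmem hzadj using hzex
        have hzinj : Function.Injective z := by
          intro m m' heq
          by_contra hmm
          exact Set.disjoint_left.mp (hdisj (y m) (y m') (fun h => hmm (hyinj h)))
            (hzmem m) (heq ▸ hzmem m')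
        have hmem : ∀ m, z m ∈ insert (Sum.inl (⟨u k, ui_ne_v hadj k⟩ : {w : V // w ≠ v}))
            ((Finset.univ.erase k).image (Sum.inr : Fin 3 → {w : V // w ≠ v} ⊕ Fin 3)) := by
          intro m
          have hA := hzadj m
          cases hzm : z m with
          | inl b =>
            rw [hzm] at hA
            exact Finset.mem_insert.mpr (Or.inl
              (congrArg Sum.inl (Subtype.ext (tadj_inr_inl.mp hA))))
          | inr i =>
            rw [hzm] at hA
            exact Finset.mem_insert.mpr (Or.inr (Finset.mem_image.mpr
              ⟨i, Finset.mem_erase.mpr ⟨Ne.symm (tadj_inr_inr.mp hA), Finset.mem_univ i⟩, rfl⟩))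
        have hcard : (insert (Sum.inl (⟨u k, ui_ne_v hadj k⟩ : {w : V // w ≠ v}))
            ((Finset.univ.erase k).image (Sum.inr : Fin 3 → {w : V // w ≠ v} ⊕ Fin 3))).card < 4 := by
          have h1 := Finset.card_insert_le (Sum.inl (⟨u k, ui_ne_v hadj k⟩ : {w : V // w ≠ v}))
            ((Finset.univ.erase k).image (Sum.inr : Fin 3 → {w : V // w ≠ v} ⊕ Fin 3))
          have h2 : ((Finset.univ.erase k).image (Sum.inr : Fin 3 → {w : V // w ≠ v} ⊕ Fin 3)).card ≤
              (Finset.univ.erase k).card := Finset.card_image_le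
          have h3 : (Finset.univ.erase k).card = 2 := by
            rw [Finset.card_erase_of_mem (Finset.mem_univ k), Finset.card_univ]
            rfl
          omega
        exact pigeon_finset _ z hzinj hmem hcard
    · have hC1g : ∀ w c, Sum.inr c ∈ f w → Sum.inl ⟨u c, ui_ne_v hadj c⟩ ∈ f w := by
        intro w c hc
        by_contra hnl
        exact hS ⟨w, c, hsing w c hc hnl (fun j' hj' => hC2g w j' c hj' hc)⟩
      by_cases h2 : ∃ w₁ w₂ i₁ i₂, w₁ ≠ w₂ ∧ Sum.inr i₁ ∈ f w₁ ∧ Sum.inr i₂ ∈ f w₂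
      · obtain ⟨w₁, w₂, i₁, i₂, h12, hi1, hi2⟩ := h2
        by_cases h3 : ∃ w₃ i₃, w₃ ≠ w₁ ∧ w₃ ≠ w₂ ∧ Sum.inr i₃ ∈ f w₃
        · obtain ⟨w₃, i₃, h31, h32, hi3⟩ := h3
          have d12 : i₁ ≠ i₂ := fun h => h12 (huniq i₁ w₁ w₂ hi1 (by rw [h]; exact hi2))
          have d13 : i₁ ≠ i₃ := fun h => (Ne.symm h31) (huniq i₁ w₁ w₃ hi1 (by rw [h]; exact hi3))
          have d23 : i₂ ≠ i₃ := fun h => (Ne.symm h32) (huniq i₂ w₂ w₃ hi2 (by rw [h]; exact hi3))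
          have hocc : ∀ w c, Sum.inr c ∈ f w → w = w₁ ∨ w = w₂ ∨ w = w₃ := by
            intro w c hc
            rcases fin3_cover3 i₁ i₂ i₃ c d12 d13 d23 with h | h | h
            · exact Or.inl (huniq c w w₁ hc (by rw [h]; exact hi1))
            · exact Or.inr (Or.inl (huniq c w w₂ hc (by rw [h]; exact hi2)))
            · exact Or.inr (Or.inr (huniq c w w₃ hc (by rw [h]; exact hi3)))
          have build3 : ∀ p q r : W, (∀ w c, Sum.inr c ∈ f w → w = p ∨ w = q ∨ w = r) →
              OKpair G v u H f p q → GraphMinor H G := by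
            intro p q r hocc' hOKpq
            refine build_minor H hu hadj f hne hconn hdisj hedge r
              (fun w _ c => hC1g w c) (fun w _ => hC2g w) ?_
            intro w w' hw hw' hww hH' c d hc hd
            rcases hocc' w c hc with h | h | h
            · subst h
              rcases hocc' w' d hd with h' | h' | h'
              · exact absurd h' (Ne.symm hww)
              · subst h'
                exact hOKpq hH'
              · exact absurd h' hw'
            · subst h
              rcases hocc' w' d hd with h' | h' | h'
              · subst h'
                exact hOKpq.symm hH'
              · exact absurd h' (Ne.symm hww)
              · exact absurd h' hw'
            · exact absurd h hw
          by_cases q12 : OKpair G v u H f w₁ w₂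
          · exact Or.inl (build3 w₁ w₂ w₃ hocc q12)
          · by_cases q13 : OKpair G v u H f w₁ w₃
            · refine Or.inl (build3 w₁ w₃ w₂ ?_ q13)
              intro w c hc
              rcases hocc w c hc with h | h | h
              · exact Or.inl h
              · exact Or.inr (Or.inr h)
              · exact Or.inr (Or.inl h)
            · by_cases q23 : OKpair G v u H f w₂ w₃
              · refine Or.inl (build3 w₂ w₃ w₁ ?_ q23)
                intro w c hc
                rcases hocc w c hc with h | h | h
                · exact Or.inr (Or.inr h)
                · exact Or.inl h
                · exact Or.inr (Or.inl h)
              · have bad : ∀ a b : W, ¬ OKpair G v u H f a b → H.Adj a b := by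
                  intro a b h
                  by_contra hH'
                  exact h (fun h' => absurd h' hH')
                have hA12 : H.Adj w₁ w₂ := bad _ _ q12
                have hA13 : H.Adj w₁ w₃ := bad _ _ q13
                have hA23 : H.Adj w₂ w₃ := bad _ _ q23
                rcases hside with htri | ⟨hdeg4, hext⟩
                · exact absurd hA23 (fun h => htri w₁ w₂ w₃ hA12 hA13 h)
                · right
                  obtain ⟨d, e, hde, hd1, hd2, hd3, he1, he2, he3,
                      hDa1, hDa2, hDa3, hEa1, hEa2, hEa3⟩ :=
                    hext w₁ w₂ w₃ h12 (Ne.symm h31) (Ne.symm h32)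
                  have hTfree : ∀ wd, wd ≠ w₁ → wd ≠ w₂ → wd ≠ w₃ → ∀ j, Sum.inr j ∉ f wd := by
                    intro wd n1 n2 n3 j hj
                    rcases hocc wd j hj with h | h | h
                    exacts [n1 h, n2 h, n3 h]
                  have hAconn : ∀ w : W, (G.induce (tA v (f w))).Connected := fun w =>
                    conn_minusT hadj (hconn w)
                      (fun j hj => ⟨hC1g w j hj, fun j' hj' => hC2g w j' j hj' hj⟩)
                  have hAne : ∀ w : W, (tA v (f w)).Nonempty := by
                    intro w
                    obtain ⟨x, hx⟩ := hne w
                    cases x with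
                    | inl a => exact ⟨a.1, mem_tA_of_inl hx⟩
                    | inr i => exact ⟨u i, mem_tA_of_inl (hC1g w i hx)⟩
                  have hu1 : u i₁ ∈ tA v (f w₁) := mem_tA_of_inl (hC1g w₁ i₁ hi1)
                  have hu2 : u i₂ ∈ tA v (f w₂) := mem_tA_of_inl (hC1g w₂ i₂ hi2)
                  have hu3 : u i₃ ∈ tA v (f w₃) := mem_tA_of_inl (hC1g w₃ i₃ hi3)
                  have hdA : ∀ p q : W, p ≠ q → Disjoint (tA v (f p)) (tA v (f q)) :=
                    fun p q h => tA_disj (hdisj p q h)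
                  have hdv : ∀ p : W, Disjoint ({v} : Set V) (tA v (f p)) :=
                    fun p => Set.disjoint_singleton_left.mpr v_notin_tA
                  have hwit : ∀ p q : W, p ≠ q → (∀ j, Sum.inr j ∉ f p) → H.Adj p q →
                      ∃ x ∈ tA v (f p), ∃ y ∈ tA v (f q), G.Adj x y := by
                    intro p q hpq hTp hH'
                    obtain ⟨x, hx, yy, hy, hxy⟩ := hedge p q hH'
                    cases x with
                    | inr i => exact absurd hx (hTp i)
                    | inl a =>
                      cases yy with
                      | inl b =>
                        exact ⟨a.1, mem_tA_of_inl hx, b.1, mem_tA_of_inl hy, tadj_inl_inl.mp hxy⟩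
                      | inr j =>
                        have ha : a = ⟨u j, ui_ne_v hadj j⟩ := Subtype.ext (tadj_inl_inr.mp hxy)
                        have : Sum.inl a ∈ f q := by rw [ha]; exact hC1g q j hy
                        exact (Set.disjoint_left.mp (hdisj p q hpq) hx this).elim
                  refine ⟨Sum.elim ![{v}, tA v (f d), tA v (f e)]
                    ![tA v (f w₁), tA v (f w₂), tA v (f w₃)], ?_, ?_, ?_, ?_⟩
                  · rintro (t | m)
                    · fin_cases t
                      · exact ⟨v, rfl⟩
                      · exact hAne d
                      · exact hAne e
                    · fin_cases m
                      · exact ⟨u i₁, hu1⟩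
                      · exact ⟨u i₂, hu2⟩
                      · exact ⟨u i₃, hu3⟩
                  · rintro (t | m)
                    · fin_cases t
                      · exact induce_singleton_conn v
                      · exact hAconn d
                      · exact hAconn e
                    · fin_cases m
                      · exact hAconn w₁
                      · exact hAconn w₂
                      · exact hAconn w₃
                  · rintro (t | m) (t' | m') hne'
                    · fin_cases t <;> fin_cases t'
                      all_goals first
                        | exact absurd rfl hne'
                        | exact hdv _
                        | exact (hdv _).symm
                        | { apply hdA
                            first
                              | exact h12 | exact Ne.symm h12 | exact h31 | exact Ne.symm h31
                              | exact h32 | exact Ne.symm h32 | exact hde | exact Ne.symm hde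
                              | exact hd1 | exact Ne.symm hd1 | exact hd2 | exact Ne.symm hd2
                              | exact hd3 | exact Ne.symm hd3 | exact he1 | exact Ne.symm he1
                              | exact he2 | exact Ne.symm he2 | exact he3 | exact Ne.symm he3 }
                    · fin_cases t <;> fin_cases m'
                      all_goals first
                        | exact absurd rfl hne'
                        | exact hdv _
                        | exact (hdv _).symm
                        | { apply hdA
                            first
                              | exact h12 | exact Ne.symm h12 | exact h31 | exact Ne.symm h31
                              | exact h32 | exact Ne.symm h32 | exact hde | exact Ne.symm hde
                              | exact hd1 | exact Ne.symm hd1 | exact hd2 | exact Ne.symm hd2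
                              | exact hd3 | exact Ne.symm hd3 | exact he1 | exact Ne.symm he1
                              | exact he2 | exact Ne.symm he2 | exact he3 | exact Ne.symm he3 }
                    · fin_cases m <;> fin_cases t'
                      all_goals first
                        | exact absurd rfl hne'
                        | exact hdv _
                        | exact (hdv _).symm
                        | { apply hdA
                            first
                              | exact h12 | exact Ne.symm h12 | exact h31 | exact Ne.symm h31
                              | exact h32 | exact Ne.symm h32 | exact hde | exact Ne.symm hde
                              | exact hd1 | exact Ne.symm hd1 | exact hd2 | exact Ne.symm hd2
                              | exact hd3 | exact Ne.symm hd3 | exact he1 | exact Ne.symm he1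
                              | exact he2 | exact Ne.symm he2 | exact he3 | exact Ne.symm he3 }
                    · fin_cases m <;> fin_cases m'
                      all_goals first
                        | exact absurd rfl hne'
                        | exact hdv _
                        | exact (hdv _).symm
                        | { apply hdA
                            first
                              | exact h12 | exact Ne.symm h12 | exact h31 | exact Ne.symm h31
                              | exact h32 | exact Ne.symm h32 | exact hde | exact Ne.symm hde
                              | exact hd1 | exact Ne.symm hd1 | exact hd2 | exact Ne.symm hd2
                              | exact hd3 | exact Ne.symm hd3 | exact he1 | exact Ne.symm he1
                              | exact he2 | exact Ne.symm he2 | exact he3 | exact Ne.symm he3 }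
                  · rintro (t | m) (t' | m') hadj'
                    · rw [completeBipartiteGraph_adj] at hadj'
                      simp at hadj'
                    · fin_cases t <;> fin_cases m'
                      · exact ⟨v, rfl, u i₁, hu1, hadj i₁⟩
                      · exact ⟨v, rfl, u i₂, hu2, hadj i₂⟩
                      · exact ⟨v, rfl, u i₃, hu3, hadj i₃⟩
                      · exact hwit d w₁ hd1 (hTfree d hd1 hd2 hd3) hDa1
                      · exact hwit d w₂ hd2 (hTfree d hd1 hd2 hd3) hDa2
                      · exact hwit d w₃ hd3 (hTfree d hd1 hd2 hd3) hDa3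
                      · exact hwit e w₁ he1 (hTfree e he1 he2 he3) hEa1
                      · exact hwit e w₂ he2 (hTfree e he1 he2 he3) hEa2
                      · exact hwit e w₃ he3 (hTfree e he1 he2 he3) hEa3
                    · fin_cases m <;> fin_cases t'
                      · exact ⟨u i₁, hu1, v, rfl, (hadj i₁).symm⟩
                      · obtain ⟨x, hx, yy, hy, hxy⟩ := hwit d w₁ hd1 (hTfree d hd1 hd2 hd3) hDa1
                        exact ⟨yy, hy, x, hx, hxy.symm⟩
                      · obtain ⟨x, hx, yy, hy, hxy⟩ := hwit e w₁ he1 (hTfree e he1 he2 he3) hEa1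
                        exact ⟨yy, hy, x, hx, hxy.symm⟩
                      · exact ⟨u i₂, hu2, v, rfl, (hadj i₂).symm⟩
                      · obtain ⟨x, hx, yy, hy, hxy⟩ := hwit d w₂ hd2 (hTfree d hd1 hd2 hd3) hDa2
                        exact ⟨yy, hy, x, hx, hxy.symm⟩
                      · obtain ⟨x, hx, yy, hy, hxy⟩ := hwit e w₂ he2 (hTfree e he1 he2 he3) hEa2
                        exact ⟨yy, hy, x, hx, hxy.symm⟩
                      · exact ⟨u i₃, hu3, v, rfl, (hadj i₃).symm⟩
                      · obtain ⟨x, hx, yy, hy, hxy⟩ := hwit d w₃ hd3 (hTfree d hd1 hd2 hd3) hDa3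
                        exact ⟨yy, hy, x, hx, hxy.symm⟩
                      · obtain ⟨x, hx, yy, hy, hxy⟩ := hwit e w₃ he3 (hTfree e he1 he2 he3) hEa3
                        exact ⟨yy, hy, x, hx, hxy.symm⟩
                    · rw [completeBipartiteGraph_adj] at hadj'
                      simp at hadj'
        · left
          refine build_minor H hu hadj f hne hconn hdisj hedge w₁
            (fun w _ c => hC1g w c) (fun w _ => hC2g w) ?_
          intro w w' hw hw' hww hH' c d hc hd
          exfalso
          have hw2 : w = w₂ := by
            by_contra h
            exact h3 ⟨w, c, hw, h, hc⟩
          have hw2' : w' = w₂ := by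
            by_contra h
            exact h3 ⟨w', d, hw', h, hd⟩
          exact hww (hw2.trans hw2'.symm)
      · left
        by_cases hT : ∃ w i, Sum.inr i ∈ f w
        · obtain ⟨wT, iT, hiT⟩ := hT
          refine build_minor H hu hadj f hne hconn hdisj hedge wT
            (fun w _ c => hC1g w c) (fun w _ => hC2g w) ?_
          intro w w' hw hw' hww hH' c d hc hd
          exact absurd ⟨w, wT, c, iT, hw, hc, hiT⟩ h2
        · refine build_minor H hu hadj f hne hconn hdisj hedge (Classical.arbitrary W)
            (fun w _ c hc => absurd ⟨w, c, hc⟩ hT) (fun w _ i j hi _ => absurd ⟨w, i, hi⟩ hT) ?_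
          intro w w' hw hw' hww hH' c d hc hd
          exact absurd ⟨w, c, hc⟩ hT
end Minor3
section K5K33
set_option maxRecDepth 10000

lemma K5_deg3 : ∀ w : Fin 5, ∃ y : Fin 3 → Fin 5, Function.Injective y ∧
    ∀ m, (completeGraph (Fin 5)).Adj w (y m) := by
  simp only [completeGraph, top_adj]; decide

lemma K5_deg4 : ∀ w : Fin 5, ∃ y : Fin 4 → Fin 5, Function.Injective y ∧
    ∀ m, (completeGraph (Fin 5)).Adj w (y m) := by
  simp only [completeGraph, top_adj]; decide

lemma K5_ext : ∀ a b c : Fin 5, a ≠ b → a ≠ c → b ≠ c → ∃ d e : Fin 5, d ≠ e ∧ d ≠ a ∧ d ≠ b ∧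
    d ≠ c ∧ e ≠ a ∧ e ≠ b ∧ e ≠ c ∧ (completeGraph (Fin 5)).Adj d a ∧
    (completeGraph (Fin 5)).Adj d b ∧ (completeGraph (Fin 5)).Adj d c ∧
    (completeGraph (Fin 5)).Adj e a ∧ (completeGraph (Fin 5)).Adj e b ∧
    (completeGraph (Fin 5)).Adj e c := by
  simp only [completeGraph, top_adj]
  set_option synthInstance.maxSize 4096 in decide

lemma K33_deg3 : ∀ w : Fin 3 ⊕ Fin 3, ∃ y : Fin 3 → Fin 3 ⊕ Fin 3, Function.Injective y ∧
    ∀ m, (completeBipartiteGraph (Fin 3) (Fin 3)).Adj w (y m) := by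
  simp only [completeBipartiteGraph_adj]; decide

lemma K33_trifree : ∀ a b c : Fin 3 ⊕ Fin 3, (completeBipartiteGraph (Fin 3) (Fin 3)).Adj a b →
    (completeBipartiteGraph (Fin 3) (Fin 3)).Adj a c →
    (completeBipartiteGraph (Fin 3) (Fin 3)).Adj b c → False := by
  simp only [completeBipartiteGraph_adj]; decide
end K5K33

section Planar
variable {V : Type} {G : SimpleGraph V} {v : V} {u : Fin 3 → V}

lemma tplanar (hu : Function.Injective u) (hadj : ∀ i, G.Adj v (u i))
    (hpl : IsPlanar G) : IsPlanar (truncateVertex G v u) := by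
  constructor
  · intro hK5
    rcases no_minor (completeGraph (Fin 5)) hu hadj K5_deg3
      (Or.inr ⟨K5_deg4, K5_ext⟩) hK5 with h | h
    · exact hpl.1 h
    · exact hpl.2 h
  · intro hK33
    rcases no_minor (completeBipartiteGraph (Fin 3) (Fin 3)) hu hadj K33_deg3
      (Or.inl K33_trifree) hK33 with h | h
    · exact hpl.2 h
    · exact hpl.2 h
end Planar

/-- Truncating a vertex of a 3-connected 3-regular planar graph yields again a
3-connected 3-regular planar graph, with two more vertices. -/
theorem truncateVertex_properties {V : Type} [Fintype V] (G : SimpleGraph V)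
    (v : V) (u : Fin 3 → V)
    (h3 : ThreeConnected G) (hreg : ∀ x : V, (G.neighborSet x).ncard = 3)
    (hpl : IsPlanar G) (hu : Function.Injective u) (hadj : ∀ i, G.Adj v (u i)) :
    ThreeConnected (truncateVertex G v u) ∧
    (∀ x, ((truncateVertex G v u).neighborSet x).ncard = 3) ∧
    IsPlanar (truncateVertex G v u) ∧
    Nat.card ({w : V // w ≠ v} ⊕ Fin 3) = Nat.card V + 2 := by
  exact ⟨tconn hu hadj hreg h3, treg hu hadj hreg, tplanar hu hadj hpl, tcard_eq v h3.1⟩
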